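/- Let 𝒢 := ((ℌ_n, ω_n))_{n∈ℕ*} be a *-fusion frame of a Hilbert 𝔄-module ℌ with lower bound A. Then the analysis operator 𝒮_𝒢 : ℌ → ℌ, x ↦ ∑_{n=1}^∞ ω_n² P_{ℌ_n}(x), is an invertible operator; in particular its positive square root √𝒮_𝒢 satisfies ‖√𝒮_𝒢(x)‖_ℌ ≥ ‖A⁻¹‖_𝔄⁻¹ ‖x‖_ℌ for all x ∈ ℌ. -/

import Mathlib

set_option linter.unusedSectionVars false
set_option linter.unusedVariables false
set_option maxHeartbeats 2000000

open scoped InnerProductSpace RightActions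

variable {𝔄 : Type*} [CStarAlgebra 𝔄] [PartialOrder 𝔄] [StarOrderedRing 𝔄]
/-- The Hilbert C⋆-module class as Mathlib stated it in December 2024 (right `A`-action,
inner product `A`-linear on the right); Mathlib's current `CStarModule` uses a left action. -/
class CStarModuleRight (A E : Type*) [NonUnitalSemiring A] [StarRing A] [Module ℂ A]
    [AddCommGroup E] [Module ℂ E] [PartialOrder A] [SMul Aᵐᵒᵖ E] [Norm A] [Norm E]
    extends Inner A E where
  inner_add_right {x} {y} {z} : inner x (y + z) = inner x y + inner x z
  inner_self_nonneg {x} : 0 ≤ inner x x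
  inner_self {x} : inner x x = 0 ↔ x = 0
  inner_op_smul_right {a : A} {x y : E} : inner x (y <• a) = inner x y * a
  inner_smul_right_complex {z : ℂ} {x} {y} : inner x (z • y) = z • inner x y
  star_inner x y : star (inner x y) = inner y x
  norm_eq_sqrt_norm_inner_self x : ‖x‖ = √‖inner x x‖

variable {H : Type*} [NormedAddCommGroup H] [NormedSpace ℂ H] [Module 𝔄ᵐᵒᵖ H]
  [CStarModuleRight 𝔄 H] [CompleteSpace H]

/-- An element of a C*-algebra is *strictly positive* if it is positive and invertible. -/
def IsStrictlyPositive' (a : 𝔄) : Prop := 0 ≤ a ∧ IsUnit a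

/-- A *weight* of the C*-algebra `𝔄` is a sequence of central strictly positive elements. -/
def IsWeight (ω : ℕ → 𝔄) : Prop :=
  ∀ n, ω n ∈ Set.center 𝔄 ∧ IsStrictlyPositive' (ω n)

/-- `P` is the orthogonal projection of the Hilbert `𝔄`-module `H` onto the orthogonally
complemented submodule `K`: a bounded `𝔄`-linear idempotent which is self-adjoint with
respect to the `𝔄`-valued inner product and has range `K`. -/
def IsOrthoProjectionOnto (P : H →L[ℂ] H) (K : Submodule 𝔄ᵐᵒᵖ H) : Prop :=
  (∀ (a : 𝔄) (x : H), P (x <• a) = (P x) <• a) ∧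
  (∀ x, P (P x) = P x) ∧
  (∀ x y : H, ⟪P x, y⟫_𝔄 = ⟪x, P y⟫_𝔄) ∧
  (∀ x, P x ∈ K) ∧ (∀ x ∈ K, P x = x)

/-- The weighted sequence of orthogonally complemented submodules whose orthogonal
projections are `P n` is a *-fusion frame of `H` with lower bound `A` and upper bound `B`. -/
def IsFusionFrameWith (P : ℕ → H →L[ℂ] H) (ω : ℕ → 𝔄) (A B : 𝔄) : Prop :=
  IsStrictlyPositive' A ∧ IsStrictlyPositive' B ∧
  ∀ x : H, Summable (fun n => ω n ^ 2 * ⟪P n x, P n x⟫_𝔄) ∧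
    ⟪x <• A, x <• A⟫_𝔄 ≤ ∑' n, ω n ^ 2 * ⟪P n x, P n x⟫_𝔄 ∧
    (∑' n, ω n ^ 2 * ⟪P n x, P n x⟫_𝔄) ≤ ⟪x <• B, x <• B⟫_𝔄

/-- A *-fusion frame (with some pair of strictly positive bounds). -/
def IsFusionFrame (P : ℕ → H →L[ℂ] H) (ω : ℕ → 𝔄) : Prop :=
  ∃ A B : 𝔄, IsFusionFrameWith P ω A B


namespace CStarModuleRight

attribute [simp] CStarModuleRight.inner_add_right CStarModuleRight.star_inner
attribute [simp] CStarModuleRight.inner_op_smul_right CStarModuleRight.inner_smul_right_complex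

@[simp]
lemma inner_add_left {x y z : H} : ⟪x + y, z⟫_𝔄 = ⟪x, z⟫_𝔄 + ⟪y, z⟫_𝔄 := by
  rw [← star_star (r := ⟪x + y, z⟫_𝔄)]
  simp only [inner_add_right, star_add, star_inner]

@[simp]
lemma inner_op_smul_left {a : 𝔄} {x y : H} : ⟪x <• a, y⟫_𝔄 = star a * ⟪x, y⟫_𝔄 := by
  rw [← star_inner]; simp

@[simp]
lemma inner_smul_left_complex {z : ℂ} {x y : H} : ⟪z • x, y⟫_𝔄 = star z • ⟪x, y⟫_𝔄 := by
  rw [← star_inner]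
  simp

@[simp]
lemma inner_smul_left_real {z : ℝ} {x y : H} : ⟪z • x, y⟫_𝔄 = z • ⟪x, y⟫_𝔄 := by
  have h₁ : z • x = (z : ℂ) • x := by simp
  rw [h₁, ← star_inner, inner_smul_right_complex]
  simp

@[simp]
lemma inner_smul_right_real {z : ℝ} {x y : H} : ⟪x, z • y⟫_𝔄 = z • ⟪x, y⟫_𝔄 := by
  have h₁ : z • y = (z : ℂ) • y := by simp
  rw [h₁, ← star_inner, inner_smul_left_complex]
  simp

/-- The inner product, linear in the second variable. -/
def innerₗ (x : H) : H →ₗ[ℂ] 𝔄 where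
  toFun y := ⟪x, y⟫_𝔄
  map_add' z y := by simp
  map_smul' z y := by simp

@[simp] lemma inner_zero_right {x : H} : ⟪x, 0⟫_𝔄 = 0 := map_zero (innerₗ x)
@[simp] lemma inner_neg_right {x y : H} : ⟪x, -y⟫_𝔄 = -⟪x, y⟫_𝔄 := map_neg (innerₗ x) y
@[simp] lemma inner_sub_right {x y z : H} : ⟪x, y - z⟫_𝔄 = ⟪x, y⟫_𝔄 - ⟪x, z⟫_𝔄 :=
  map_sub (innerₗ x) y z
@[simp] lemma inner_sub_left {x y z : H} : ⟪x - y, z⟫_𝔄 = ⟪x, z⟫_𝔄 - ⟪y, z⟫_𝔄 := by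
  rw [← star_inner, inner_sub_right, star_sub, star_inner, star_inner]

lemma inner_sum_right {ι : Type*} {s : Finset ι} {x : H} {y : ι → H} :
    ⟪x, ∑ i ∈ s, y i⟫_𝔄 = ∑ i ∈ s, ⟪x, y i⟫_𝔄 :=
  map_sum (innerₗ x) ..

lemma isSelfAdjoint_inner_self {x : H} : IsSelfAdjoint ⟪x, x⟫_𝔄 := star_inner _ _

lemma norm_sq_eq {x : H} : ‖x‖ ^ 2 = ‖⟪x, x⟫_𝔄‖ := by
  rw [CStarModuleRight.norm_eq_sqrt_norm_inner_self (A := 𝔄) x, Real.sq_sqrt (norm_nonneg _)]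

end CStarModuleRight

lemma my_eq_of_inner (x y : H) (h : ⟪x - y, x - y⟫_𝔄 = 0) : x = y :=
  sub_eq_zero.mp (CStarModuleRight.inner_self.mp h)

lemma my_smul_op_comm (c : ℂ) (a : 𝔄) (y : H) : (c • y) <• a = c • (y <• a) := by
  apply my_eq_of_inner (𝔄 := 𝔄)
  simp only [CStarModuleRight.inner_sub_left, CStarModuleRight.inner_sub_right,
    CStarModuleRight.inner_op_smul_left, CStarModuleRight.inner_op_smul_right,
    CStarModuleRight.inner_smul_left_complex, CStarModuleRight.inner_smul_right_complex]
  simp only [smul_mul_assoc, mul_smul_comm]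
  simp

lemma my_norm_op_smul_le (x : H) (a : 𝔄) : ‖x <• a‖ ≤ ‖x‖ * ‖a‖ := by
  have h1 : ⟪x <• a, x <• a⟫_𝔄 = star a * ⟪x, x⟫_𝔄 * a := by
    simp [mul_assoc]
  have h2 : star a * ⟪x, x⟫_𝔄 * a ≤ ‖⟪x, x⟫_𝔄‖ • (star a * a) :=
    CStarAlgebra.star_left_conjugate_le_norm_smul CStarModuleRight.isSelfAdjoint_inner_self
  have h3 : (0:𝔄) ≤ star a * ⟪x, x⟫_𝔄 * a :=
    star_left_conjugate_nonneg CStarModuleRight.inner_self_nonneg a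
  have h4 : ‖x <• a‖ ^ 2 ≤ (‖x‖ * ‖a‖) ^ 2 := by
    rw [CStarModuleRight.norm_sq_eq (𝔄 := 𝔄), h1]
    calc ‖star a * ⟪x, x⟫_𝔄 * a‖ ≤ ‖‖⟪x, x⟫_𝔄‖ • (star a * a)‖ :=
          CStarAlgebra.norm_le_norm_of_nonneg_of_le h3 h2
      _ = ‖⟪x, x⟫_𝔄‖ * ‖star a * a‖ := by
          rw [norm_smul, Real.norm_of_nonneg (norm_nonneg _)]
      _ = ‖x‖ ^ 2 * ‖a‖ ^ 2 := by
          rw [CStarRing.norm_star_mul_self, ← CStarModuleRight.norm_sq_eq (𝔄 := 𝔄)]; ring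
      _ = (‖x‖ * ‖a‖) ^ 2 := by ring
  exact (pow_le_pow_iff_left₀ (norm_nonneg _) (by positivity) (by norm_num)).mp h4


lemma my_surj_of_near {E : Type*} [NormedAddCommGroup E] [NormedSpace ℂ E] [CompleteSpace E]
    (T T' : E →L[ℂ] E) {c : ℝ} (hc : 0 < c) (hlow : ∀ x, c * ‖x‖ ≤ ‖T x‖)
    (hsurj : Function.Surjective T) (hnear : ‖T' - T‖ < c) :
    Function.Surjective T' := by
  have hinj : Function.Injective T := by
    intro x y hxy
    have h1 := hlow (x - y)
    rw [map_sub, hxy, sub_self, norm_zero] at h1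
    have := norm_nonneg (x - y)
    have hxy0 : ‖x - y‖ = 0 := by nlinarith
    exact sub_eq_zero.mp (norm_eq_zero.mp hxy0)
  let e : E ≃ₗ[ℂ] E := LinearEquiv.ofBijective (T : E →ₗ[ℂ] E) ⟨hinj, hsurj⟩
  have he : ∀ z, T (e.symm z) = z := fun z => e.apply_symm_apply z
  have hsymm_bound : ∀ z, ‖e.symm z‖ ≤ c⁻¹ * ‖z‖ := by
    intro z
    have h1 := hlow (e.symm z)
    rw [he z] at h1
    rw [inv_mul_eq_div, le_div_iff₀ hc, mul_comm]
    exact h1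
  let Tinv : E →L[ℂ] E := LinearMap.mkContinuous (e.symm : E →ₗ[ℂ] E) c⁻¹ hsymm_bound
  have hTinv_apply : ∀ z, Tinv z = e.symm z := fun _ => rfl
  have hTinv_norm : ‖Tinv‖ ≤ c⁻¹ :=
    LinearMap.mkContinuous_norm_le _ (by positivity) _
  set N : E →L[ℂ] E := Tinv.comp (T - T') with hN
  have hNnorm : ‖N‖ < 1 := by
    calc ‖N‖ ≤ ‖Tinv‖ * ‖T - T'‖ := ContinuousLinearMap.opNorm_comp_le _ _
      _ < c⁻¹ * c := by
          rw [norm_sub_rev]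
          rcases eq_or_lt_of_le (norm_nonneg (T' - T)) with h | h
          · rw [← h, mul_zero]; positivity
          · calc ‖Tinv‖ * ‖T' - T‖ ≤ c⁻¹ * ‖T' - T‖ := by
                  apply mul_le_mul_of_nonneg_right hTinv_norm (norm_nonneg _)
              _ < c⁻¹ * c := by
                  apply mul_lt_mul_of_pos_left hnear (by positivity)
      _ = 1 := inv_mul_cancel₀ hc.ne'
  let u : (E →L[ℂ] E)ˣ := Units.oneSub N hNnorm
  have hfact : ∀ x, T' x = T (u.val x) := by
    intro x
    have : u.val x = x - Tinv ((T - T') x) := rfl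
    rw [this, map_sub, hTinv_apply, he]
    simp
  intro y
  obtain ⟨z, hz⟩ := hsurj y
  refine ⟨u.inv z, ?_⟩
  have h2 : (↑u : E →L[ℂ] E) (u.inv z) = z := by
    rw [← ContinuousLinearMap.mul_apply, u.val_inv, ContinuousLinearMap.one_apply]
  rw [hfact, h2, hz]


section qf

variable (P : ℕ → H →L[ℂ] H) (ω : ℕ → 𝔄)

/-- The partial frame form. -/
noncomputable def qf (F : Finset ℕ) (u v : H) : 𝔄 :=
  ∑ n ∈ F, ω n ^ 2 * ⟪P n u, P n v⟫_𝔄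

/-- Partial sums of the frame operator series. -/
noncomputable def TF (F : Finset ℕ) (x : H) : H :=
  ∑ n ∈ F, (P n x) <• (ω n ^ 2)

variable {P ω}
variable (hcomm : ∀ n (b : 𝔄), ω n * b = b * ω n) (hsa : ∀ n, star (ω n) = ω n)

section basic
include hcomm

lemma wsq_comm : ∀ n (b : 𝔄), ω n ^ 2 * b = b * ω n ^ 2 := by
  intro n b
  rw [sq, mul_assoc, hcomm n b, ← mul_assoc, hcomm n b, mul_assoc]

include hsa

lemma wsq_star : ∀ n, star (ω n ^ 2) = ω n ^ 2 := by
  intro n; rw [sq, star_mul, hsa]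

lemma wsq_mul_nonneg {c : 𝔄} (hc : 0 ≤ c) (n : ℕ) : 0 ≤ ω n ^ 2 * c := by
  have key : ω n ^ 2 * c = star (ω n) * c * ω n := by
    rw [hsa, mul_assoc, ← hcomm n c, ← mul_assoc, ← sq]
  rw [key]
  exact star_left_conjugate_nonneg hc (ω n)

lemma qf_nonneg (F : Finset ℕ) (u : H) : 0 ≤ qf P ω F u u :=
  Finset.sum_nonneg fun n _ =>
    wsq_mul_nonneg hcomm hsa CStarModuleRight.inner_self_nonneg n

lemma qf_star (F : Finset ℕ) (u v : H) : star (qf P ω F u v) = qf P ω F v u := by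
  unfold qf
  rw [star_sum]
  refine Finset.sum_congr rfl fun n _ => ?_
  rw [star_mul, wsq_star hcomm hsa, CStarModuleRight.star_inner, wsq_comm hcomm]

lemma qf_smul_right (F : Finset ℕ) (u v : H) (a : 𝔄)
    (hPsmul : ∀ n (a : 𝔄) x, P n (x <• a) = (P n x) <• a) :
    qf P ω F u (v <• a) = qf P ω F u v * a := by
  unfold qf
  rw [Finset.sum_mul]
  refine Finset.sum_congr rfl fun n _ => ?_
  rw [hPsmul, CStarModuleRight.inner_op_smul_right, mul_assoc]

lemma qf_smul_left (F : Finset ℕ) (u v : H) (a : 𝔄)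
    (hPsmul : ∀ n (a : 𝔄) x, P n (x <• a) = (P n x) <• a) :
    qf P ω F (u <• a) v = star a * qf P ω F u v := by
  unfold qf
  rw [Finset.mul_sum]
  refine Finset.sum_congr rfl fun n _ => ?_
  rw [hPsmul, CStarModuleRight.inner_op_smul_left, ← mul_assoc, wsq_comm hcomm, mul_assoc]

lemma qf_sub_left (F : Finset ℕ) (u v w : H) :
    qf P ω F (u - v) w = qf P ω F u w - qf P ω F v w := by
  unfold qf
  rw [← Finset.sum_sub_distrib]
  refine Finset.sum_congr rfl fun n _ => ?_
  rw [map_sub, CStarModuleRight.inner_sub_left, mul_sub]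

lemma qf_sub_right (F : Finset ℕ) (u v w : H) :
    qf P ω F u (v - w) = qf P ω F u v - qf P ω F u w := by
  unfold qf
  rw [← Finset.sum_sub_distrib]
  refine Finset.sum_congr rfl fun n _ => ?_
  rw [map_sub, CStarModuleRight.inner_sub_right, mul_sub]

/-- Cauchy–Schwarz for the partial frame form. -/
lemma qf_cs (F : Finset ℕ) (u v : H)
    (hPsmul : ∀ n (a : 𝔄) x, P n (x <• a) = (P n x) <• a) :
    ‖qf P ω F u v‖ ^ 2 ≤ ‖qf P ω F u u‖ * ‖qf P ω F v v‖ := by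
  set a : 𝔄 := qf P ω F u v with ha
  set c : 𝔄 := star a * a with hc
  have hc_nonneg : 0 ≤ c := star_mul_self_nonneg a
  have hquu_sa : IsSelfAdjoint (qf P ω F u u) := qf_star hcomm hsa F u u
  -- main inequality: for all t ≥ 0, (2*t) • c ≤ (t^2 * ‖qf u u‖) • c + qf v v
  have key : ∀ t : ℝ, 0 ≤ t →
      (2 * t) • c ≤ (t ^ 2 * ‖qf P ω F u u‖) • c + qf P ω F v v := by
    intro t ht
    have expand : (0:𝔄) ≤ qf P ω F (u <• (t • a) - v) (u <• (t • a) - v) :=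
      qf_nonneg hcomm hsa F _
    rw [qf_sub_left hcomm hsa, qf_sub_right hcomm hsa, qf_sub_right hcomm hsa,
      qf_smul_left hcomm hsa F _ _ _ hPsmul, qf_smul_right hcomm hsa F _ _ _ hPsmul,
      qf_smul_right hcomm hsa F _ _ _ hPsmul] at expand
    -- expand : 0 ≤ star (t•a) * (qf u u * (t•a)) - star(t•a) * qf u v - (qf v u * (t•a) - qf v v)
    have e1 : star (t • a) * (qf P ω F u u * (t • a)) - qf P ω F (u <• (t • a)) v
        - (qf P ω F v u * (t • a) - qf P ω F v v)
        = t ^ 2 • (star a * qf P ω F u u * a) - (2*t) • c + qf P ω F v v := by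
      rw [qf_smul_left hcomm hsa F _ _ _ hPsmul]
      have hvu : qf P ω F v u = star a := by rw [← qf_star hcomm hsa F u v]
      rw [hvu, hc, ← ha]
      simp only [star_smul, star_trivial, smul_mul_assoc, mul_smul_comm, smul_smul]
      rw [show t * t = t ^ 2 by ring, show (2*t) • (star a * a) = t • (star a * a)
        + t • (star a * a) by rw [two_mul, add_smul], mul_assoc]
      abel
    rw [e1] at expand
    have conj : star a * qf P ω F u u * a ≤ ‖qf P ω F u u‖ • c :=
      CStarAlgebra.star_left_conjugate_le_norm_smul hquu_sa
    have conj2 : t ^ 2 • (star a * qf P ω F u u * a)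
        ≤ (t ^ 2 * ‖qf P ω F u u‖) • c := by
      rw [← smul_smul]
      exact smul_le_smul_of_nonneg_left conj (sq_nonneg t)
    have h' : (2*t) • c ≤ t ^ 2 • (star a * qf P ω F u u * a) + qf P ω F v v := by
      have h2 : (0:𝔄) ≤ t ^ 2 • (star a * qf P ω F u u * a) + qf P ω F v v
          - (2*t) • c := by
        rw [show t ^ 2 • (star a * qf P ω F u u * a) + qf P ω F v v - (2*t) • c
          = t ^ 2 • (star a * qf P ω F u u * a) - (2*t) • c + qf P ω F v v by abel]
        exact expand
      exact sub_nonneg.mp h2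
    calc (2*t) • c ≤ t ^ 2 • (star a * qf P ω F u u * a) + qf P ω F v v := h'
      _ ≤ (t ^ 2 * ‖qf P ω F u u‖) • c + qf P ω F v v := by
          exact add_le_add_left conj2 _
  -- now conclude
  rcases eq_or_lt_of_le (norm_nonneg (qf P ω F u u)) with h0 | hpos
  · -- ‖qf u u‖ = 0
    have hc0 : ‖c‖ = 0 := by
      by_contra hne
      have hcpos : 0 < ‖c‖ := lt_of_le_of_ne (norm_nonneg c) (Ne.symm hne)
      set t : ℝ := (‖qf P ω F v v‖ + 1) / (2 * ‖c‖) with htdef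
      have ht : 0 ≤ t := by positivity
      have hk := key t ht
      rw [← h0, mul_zero, zero_smul, zero_add] at hk
      have hnorm : ‖(2*t) • c‖ ≤ ‖qf P ω F v v‖ :=
        CStarAlgebra.norm_le_norm_of_nonneg_of_le
          (smul_nonneg (by positivity) hc_nonneg) hk
      rw [norm_smul, Real.norm_of_nonneg (by positivity)] at hnorm
      have h2t : (2*t) * ‖c‖ = ‖qf P ω F v v‖ + 1 := by
        rw [htdef]; field_simp
      linarith [hnorm, h2t, norm_nonneg (qf P ω F v v)]
    have : ‖qf P ω F u v‖ = 0 := by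
      have := CStarRing.norm_star_mul_self (x := a)
      rw [hc] at hc0
      nlinarith [norm_nonneg (qf P ω F u v), hc0, this]
    rw [this, ← h0]
    simp
  · -- 0 < ‖qf u u‖
    set K := ‖qf P ω F u u‖ with hK
    have hk := key K⁻¹ (by positivity)
    rw [show (K⁻¹) ^ 2 * K = K⁻¹ by field_simp [sq]] at hk
    have h1 : K⁻¹ • c ≤ qf P ω F v v := by
      have h2 : (0:𝔄) ≤ qf P ω F v v - K⁻¹ • c := by
        have h3 := sub_nonneg.mpr hk
        rw [show K⁻¹ • c + qf P ω F v v - (2 * K⁻¹) • c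
          = qf P ω F v v - K⁻¹ • c by rw [two_mul, add_smul]; abel] at h3
        exact h3
      exact sub_nonneg.mp h2
    have h4 : c ≤ K • qf P ω F v v := by
      have h5 := smul_le_smul_of_nonneg_left h1 hpos.le
      rwa [smul_smul, mul_inv_cancel₀ hpos.ne', one_smul] at h5
    have h6 : ‖c‖ ≤ K * ‖qf P ω F v v‖ := by
      calc ‖c‖ ≤ ‖K • qf P ω F v v‖ :=
            CStarAlgebra.norm_le_norm_of_nonneg_of_le hc_nonneg h4
        _ = K * ‖qf P ω F v v‖ := by
            rw [norm_smul, Real.norm_of_nonneg hpos.le]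
    have h7 : ‖c‖ = ‖a‖ ^ 2 := by
      rw [hc, CStarRing.norm_star_mul_self, sq]
    rw [← h7]  -- goal was ‖a‖^2 ≤ K * ‖qvv‖
    exact h6

lemma inner_TF (hPsmul : ∀ n (a : 𝔄) (x : H), P n (x <• a) = (P n x) <• a)
    (hPidem : ∀ n (x : H), P n (P n x) = P n x)
    (hPsa : ∀ n (x y : H), ⟪P n x, y⟫_𝔄 = ⟪x, P n y⟫_𝔄)
    (F : Finset ℕ) (x y : H) :
    ⟪y, TF P ω F x⟫_𝔄 = qf P ω F y x := by
  unfold TF qf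
  rw [CStarModuleRight.inner_sum_right]
  refine Finset.sum_congr rfl fun n _ => ?_
  rw [CStarModuleRight.inner_op_smul_right, ← wsq_comm hcomm]
  congr 1
  rw [hPsa n y (P n x), hPidem]

end basic
end qf

namespace CStarModuleRight

variable (H) in
lemma norm_inner_le {x y : H} : ‖⟪x, y⟫_𝔄‖ ≤ ‖x‖ * ‖y‖ := by
  have h := qf_cs (P := fun _ => ContinuousLinearMap.id ℂ H) (ω := fun _ => (1:𝔄))
    (fun _ b => by simp) (fun _ => by simp) {0} x y (fun _ _ _ => rfl)
  simp only [qf, Finset.sum_singleton, one_pow, one_mul, ContinuousLinearMap.id_apply] at h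
  rw [← norm_sq_eq, ← norm_sq_eq, ← mul_pow] at h
  exact (pow_le_pow_iff_left₀ (norm_nonneg _) (by positivity) two_ne_zero).mp h

/-- The inner product against `y` as a bounded linear map. -/
noncomputable def innerSL (y : H) : H →L[ℂ] 𝔄 :=
  LinearMap.mkContinuous (innerₗ y) ‖y‖ (fun x => norm_inner_le H (x := y) (y := x))

lemma innerSL_apply {x y : H} : innerSL y x = ⟪y, x⟫_𝔄 := rfl

end CStarModuleRight

/-- Theorem 3.4 (second part): if `((ℌ_n, ω_n))_n` is a *-fusion frame of `H` with lower
bound `A`, then the frame operator `S : x ↦ ∑_n ω_n² • P_{ℌ_n} x` is invertible; in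
particular its positive square root `R` (any bounded self-adjoint positive operator with
`R² = S`) satisfies `‖R x‖ ≥ ‖A⁻¹‖⁻¹ ‖x‖` for all `x`. -/
theorem fusionFrame_frameOperator_invertible
    (P : ℕ → H →L[ℂ] H) (ℌ : ℕ → Submodule 𝔄ᵐᵒᵖ H) (ω : ℕ → 𝔄)
    (hproj : ∀ n, IsOrthoProjectionOnto (P n) (ℌ n))
    (hw : IsWeight ω) (A B : 𝔄) (hAu : IsUnit A)
    (hframe : IsFusionFrameWith P ω A B)
    (S : H → H) (hS : ∀ x, S x = ∑' n, (P n x) <• (ω n ^ 2)) :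
    Function.Bijective S ∧
    ∀ R : H →L[ℂ] H,
      (∀ x y : H, ⟪R x, y⟫_𝔄 = ⟪x, R y⟫_𝔄) →
      (∀ x : H, 0 ≤ ⟪x, R x⟫_𝔄) →
      (∀ x : H, R (R x) = S x) →
      ∀ x : H, ‖((hAu.unit⁻¹ : 𝔄ˣ) : 𝔄)‖⁻¹ * ‖x‖ ≤ ‖R x‖ := by
  obtain ⟨hA, hBsp, hxall⟩ := hframe
  have hsum : ∀ x : H, Summable (fun n => ω n ^ 2 * ⟪P n x, P n x⟫_𝔄) :=
    fun x => (hxall x).1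
  have hlow : ∀ x : H, ⟪x <• A, x <• A⟫_𝔄 ≤ ∑' n, ω n ^ 2 * ⟪P n x, P n x⟫_𝔄 :=
    fun x => (hxall x).2.1
  have hupp : ∀ x : H, (∑' n, ω n ^ 2 * ⟪P n x, P n x⟫_𝔄) ≤ ⟪x <• B, x <• B⟫_𝔄 :=
    fun x => (hxall x).2.2
  have hcomm : ∀ n (b : 𝔄), ω n * b = b * ω n :=
    fun n b => (Set.mem_center_iff.mp (hw n).1).comm b
  have hsaω : ∀ n, star (ω n) = ω n := fun n => IsSelfAdjoint.of_nonneg (hw n).2.1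
  have hPsmul : ∀ n (a : 𝔄) (x : H), P n (x <• a) = (P n x) <• a := fun n => (hproj n).1
  have hPidem : ∀ n (x : H), P n (P n x) = P n x := fun n => (hproj n).2.1
  have hPsa : ∀ n (x y : H), ⟪P n x, y⟫_𝔄 = ⟪x, P n y⟫_𝔄 := fun n => (hproj n).2.2.1
  have hAsa : star A = A := IsSelfAdjoint.of_nonneg hA.1
  have hg0 : ∀ (x : H) n, (0:𝔄) ≤ ω n ^ 2 * ⟪P n x, P n x⟫_𝔄 :=
    fun x n => wsq_mul_nonneg hcomm hsaω CStarModuleRight.inner_self_nonneg n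
  have hxBB : ∀ x : H, ⟪x <• B, x <• B⟫_𝔄 = star B * ⟪x, x⟫_𝔄 * B := by
    intro x
    rw [CStarModuleRight.inner_op_smul_left, CStarModuleRight.inner_op_smul_right, mul_assoc]
  have hxAA : ∀ x : H, ⟪x <• A, x <• A⟫_𝔄 = star A * ⟪x, x⟫_𝔄 * A := by
    intro x
    rw [CStarModuleRight.inner_op_smul_left, CStarModuleRight.inner_op_smul_right, mul_assoc]
  -- uniform bound on the partial frame form
  have hKb : ∀ (G : Finset ℕ) (y : H), ‖qf P ω G y y‖ ≤ ‖B‖ ^ 2 * ‖y‖ ^ 2 := by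
    intro G y
    have h1 : qf P ω G y y ≤ ⟪y <• B, y <• B⟫_𝔄 :=
      le_trans (Summable.sum_le_tsum G (fun n _ => hg0 y n) (hsum y)) (hupp y)
    have h2 : ‖qf P ω G y y‖ ≤ ‖⟪y <• B, y <• B⟫_𝔄‖ :=
      CStarAlgebra.norm_le_norm_of_nonneg_of_le (qf_nonneg hcomm hsaω G y) h1
    have h3 : ‖⟪y <• B, y <• B⟫_𝔄‖ = ‖y <• B‖ ^ 2 := (CStarModuleRight.norm_sq_eq).symm
    have h4 : ‖y <• B‖ ≤ ‖y‖ * ‖B‖ := my_norm_op_smul_le y B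
    calc ‖qf P ω G y y‖ ≤ ‖y <• B‖ ^ 2 := by rw [← h3]; exact h2
      _ ≤ (‖y‖ * ‖B‖) ^ 2 := by
          exact pow_le_pow_left₀ (norm_nonneg _) h4 2
      _ = ‖B‖ ^ 2 * ‖y‖ ^ 2 := by ring
  -- partial sum bound
  have hTFb : ∀ (F : Finset ℕ) (x : H),
      ‖TF P ω F x‖ ^ 2 ≤ ‖B‖ ^ 2 * ‖qf P ω F x x‖ := by
    intro F x
    set y := TF P ω F x with hy
    have h1 : ‖y‖ ^ 2 = ‖qf P ω F y x‖ := by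
      rw [CStarModuleRight.norm_sq_eq (𝔄 := 𝔄), inner_TF hcomm hsaω hPsmul hPidem hPsa]
    have h2 : ‖qf P ω F y x‖ ^ 2 ≤ ‖qf P ω F y y‖ * ‖qf P ω F x x‖ :=
      qf_cs hcomm hsaω F y x hPsmul
    have h3 : ‖qf P ω F y y‖ ≤ ‖B‖ ^ 2 * ‖y‖ ^ 2 := hKb F y
    rcases eq_or_lt_of_le (sq_nonneg ‖y‖) with h0 | hpos
    · rw [← h0]
      positivity
    · have h5 : ‖y‖ ^ 2 * ‖y‖ ^ 2 ≤ (‖B‖ ^ 2 * ‖qf P ω F x x‖) * ‖y‖ ^ 2 := by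
        calc ‖y‖ ^ 2 * ‖y‖ ^ 2 = ‖qf P ω F y x‖ ^ 2 := by rw [h1]; ring
          _ ≤ ‖qf P ω F y y‖ * ‖qf P ω F x x‖ := h2
          _ ≤ (‖B‖ ^ 2 * ‖y‖ ^ 2) * ‖qf P ω F x x‖ :=
              mul_le_mul_of_nonneg_right h3 (norm_nonneg _)
          _ = (‖B‖ ^ 2 * ‖qf P ω F x x‖) * ‖y‖ ^ 2 := by ring
      exact le_of_mul_le_mul_right h5 hpos
  -- summability of the frame operator series
  have hSummf : ∀ x : H, Summable (fun n => (P n x) <• (ω n ^ 2)) := by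
    intro x
    rw [summable_iff_vanishing_norm]
    intro ε hε
    obtain ⟨s, hs⟩ := summable_iff_vanishing_norm.mp (hsum x)
      (ε ^ 2 / (‖B‖ ^ 2 + 1)) (by positivity)
    refine ⟨s, fun t hts => ?_⟩
    have h1 : ‖TF P ω t x‖ ^ 2 ≤ ‖B‖ ^ 2 * ‖qf P ω t x x‖ := hTFb t x
    have h2 : ‖qf P ω t x x‖ < ε ^ 2 / (‖B‖ ^ 2 + 1) := hs t hts
    have h3 : ‖TF P ω t x‖ ^ 2 < ε ^ 2 := by
      have hb1 : (0:ℝ) < ‖B‖ ^ 2 + 1 := by positivity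
      calc ‖TF P ω t x‖ ^ 2 ≤ ‖B‖ ^ 2 * ‖qf P ω t x x‖ := h1
        _ ≤ (‖B‖ ^ 2 + 1) * ‖qf P ω t x x‖ :=
            mul_le_mul_of_nonneg_right (by linarith) (norm_nonneg _)
        _ < (‖B‖ ^ 2 + 1) * (ε ^ 2 / (‖B‖ ^ 2 + 1)) :=
            mul_lt_mul_of_pos_left h2 hb1
        _ = ε ^ 2 := by field_simp
    exact lt_of_pow_lt_pow_left₀ 2 hε.le h3
  -- the frame operator as a function
  set Sf : H → H := fun x => ∑' n, (P n x) <• (ω n ^ 2) with hSfdef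
  have hS' : ∀ x, S x = Sf x := hS
  -- inner products against Sf
  have key : ∀ x y : H,
      HasSum (fun n => ω n ^ 2 * ⟪P n y, P n x⟫_𝔄) ⟪y, Sf x⟫_𝔄 := by
    intro x y
    have h0 : HasSum (fun n => (P n x) <• (ω n ^ 2)) (Sf x) := (hSummf x).hasSum
    have h1 := h0.mapL (CStarModuleRight.innerSL (𝔄 := 𝔄) y)
    have h2 : (fun n => (CStarModuleRight.innerSL (𝔄 := 𝔄) y) ((P n x) <• (ω n ^ 2)))
        = fun n => ω n ^ 2 * ⟪P n y, P n x⟫_𝔄 := by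
      funext n
      rw [CStarModuleRight.innerSL_apply, CStarModuleRight.inner_op_smul_right,
        ← wsq_comm hcomm]
      congr 1
      rw [hPsa n y (P n x), hPidem]
    rw [h2] at h1
    exact h1
  have hSfx_inner : ∀ x : H, ⟪x, Sf x⟫_𝔄 = ∑' n, ω n ^ 2 * ⟪P n x, P n x⟫_𝔄 :=
    fun x => ((key x x).tsum_eq).symm
  have hd0 : ∀ x : H, (0:𝔄) ≤ ⟪x, Sf x⟫_𝔄 := by
    intro x
    rw [hSfx_inner]
    exact tsum_nonneg (hg0 x)
  have hd_low : ∀ x : H, star A * ⟪x, x⟫_𝔄 * A ≤ ⟪x, Sf x⟫_𝔄 := by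
    intro x
    rw [hSfx_inner]
    calc star A * ⟪x, x⟫_𝔄 * A = ⟪x <• A, x <• A⟫_𝔄 := (hxAA x).symm
      _ ≤ _ := hlow x
  have hSf_sa : ∀ x y : H, ⟪Sf y, x⟫_𝔄 = ⟪y, Sf x⟫_𝔄 := by
    intro x y
    have h1 := (key y x).star
    have h2 : (fun n => star (ω n ^ 2 * ⟪P n x, P n y⟫_𝔄))
        = fun n => ω n ^ 2 * ⟪P n y, P n x⟫_𝔄 := by
      funext n
      rw [star_mul, wsq_star hcomm hsaω, CStarModuleRight.star_inner, wsq_comm hcomm]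
    rw [h2] at h1
    have h3 := h1.unique (key x y)
    rw [← h3, CStarModuleRight.star_inner]
  -- linearity and boundedness
  have hadd : ∀ x y : H, Sf (x + y) = Sf x + Sf y := by
    intro x y
    have h1 : (fun n => (P n (x + y)) <• (ω n ^ 2))
        = fun n => (P n x) <• (ω n ^ 2) + (P n y) <• (ω n ^ 2) := by
      funext n; rw [map_add, smul_add]
    simp only [hSfdef]
    rw [h1, Summable.tsum_add (hSummf x) (hSummf y)]
  have hsmulS : ∀ (c : ℂ) (x : H), Sf (c • x) = c • Sf x := by
    intro c x
    have h1 : (fun n => (P n (c • x)) <• (ω n ^ 2))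
        = fun n => c • ((P n x) <• (ω n ^ 2)) := by
      funext n; rw [map_smul, my_smul_op_comm]
    simp only [hSfdef]
    rw [h1, Summable.tsum_const_smul c (hSummf x)]
  have hbound : ∀ x : H, ‖Sf x‖ ≤ ‖B‖ ^ 2 * ‖x‖ := by
    intro x
    have hs := (hSummf x).hasSum
    have hb : ∀ F : Finset ℕ, ‖∑ n ∈ F, (P n x) <• (ω n ^ 2)‖ ≤ ‖B‖ ^ 2 * ‖x‖ := by
      intro F
      have h1 : ‖TF P ω F x‖ ^ 2 ≤ (‖B‖ ^ 2 * ‖x‖) ^ 2 := by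
        calc ‖TF P ω F x‖ ^ 2 ≤ ‖B‖ ^ 2 * ‖qf P ω F x x‖ := hTFb F x
          _ ≤ ‖B‖ ^ 2 * (‖B‖ ^ 2 * ‖x‖ ^ 2) :=
              mul_le_mul_of_nonneg_left (hKb F x) (by positivity)
          _ = (‖B‖ ^ 2 * ‖x‖) ^ 2 := by ring
      exact (pow_le_pow_iff_left₀ (norm_nonneg _) (by positivity) (by norm_num)).mp h1
    exact le_of_tendsto hs.norm (Filter.Eventually.of_forall hb)
  let SL : H →ₗ[ℂ] H :=
    { toFun := Sf, map_add' := hadd, map_smul' := hsmulS }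
  let Sc : H →L[ℂ] H := LinearMap.mkContinuous SL (‖B‖ ^ 2) hbound
  have hSc : ∀ x, Sc x = Sf x := fun _ => rfl
  -- abbreviation for the inverse of A
  set ai : 𝔄 := ((hAu.unit⁻¹ : 𝔄ˣ) : 𝔄) with hai
  have hAai : A * ai = 1 := hAu.mul_val_inv
  have haiA : ai * A = 1 := hAu.val_inv_mul
  -- fundamental norm estimate from the lower frame bound
  have hAA : ∀ (x : H) (Y : 𝔄), star A * ⟪x, x⟫_𝔄 * A ≤ Y →
      ‖x‖ ^ 2 ≤ (‖ai‖ * ‖ai‖) * ‖Y‖ := by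
    intro x Y hY
    have h1 : ⟪x, x⟫_𝔄 = star ai * (star A * ⟪x, x⟫_𝔄 * A) * ai := by
      have e1 : star ai * star A = 1 := by
        rw [← star_mul, hAai, star_one]
      calc ⟪x, x⟫_𝔄 = (star ai * star A) * ⟪x, x⟫_𝔄 * (A * ai) := by
            rw [e1, hAai, one_mul, mul_one]
        _ = star ai * (star A * ⟪x, x⟫_𝔄 * A) * ai := by
            simp only [mul_assoc]
    have h2 : ‖star A * ⟪x, x⟫_𝔄 * A‖ ≤ ‖Y‖ :=
      CStarAlgebra.norm_le_norm_of_nonneg_of_le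
        (star_left_conjugate_nonneg CStarModuleRight.inner_self_nonneg A) hY
    calc ‖x‖ ^ 2 = ‖⟪x, x⟫_𝔄‖ := CStarModuleRight.norm_sq_eq
      _ = ‖star ai * (star A * ⟪x, x⟫_𝔄 * A) * ai‖ := by rw [← h1]
      _ ≤ ‖star ai * (star A * ⟪x, x⟫_𝔄 * A)‖ * ‖ai‖ := norm_mul_le _ _
      _ ≤ (‖star ai‖ * ‖star A * ⟪x, x⟫_𝔄 * A‖) * ‖ai‖ :=
          mul_le_mul_of_nonneg_right (norm_mul_le _ _) (norm_nonneg _)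
      _ = (‖ai‖ * ‖ai‖) * ‖star A * ⟪x, x⟫_𝔄 * A‖ := by rw [norm_star]; ring
      _ ≤ (‖ai‖ * ‖ai‖) * ‖Y‖ :=
          mul_le_mul_of_nonneg_left h2 (by positivity)
  -- second part of the theorem (square root estimate), proven first
  have Rpart : ∀ R : H →L[ℂ] H,
      (∀ x y : H, ⟪R x, y⟫_𝔄 = ⟪x, R y⟫_𝔄) →
      (∀ x : H, 0 ≤ ⟪x, R x⟫_𝔄) →
      (∀ x : H, R (R x) = S x) →
      ∀ x : H, ‖ai‖⁻¹ * ‖x‖ ≤ ‖R x‖ := by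
    intro R hRsa _ hRsq x
    rcases eq_or_lt_of_le (norm_nonneg ai) with h0 | hα
    · rw [← h0]
      simp [norm_nonneg]
    · have hRR : ⟪R x, R x⟫_𝔄 = ⟪x, Sf x⟫_𝔄 := by
        rw [hRsa x (R x), hRsq x, hS' x]
      have h1 : ‖x‖ ^ 2 ≤ (‖ai‖ * ‖ai‖) * ‖⟪R x, R x⟫_𝔄‖ := by
        apply hAA
        rw [hRR]
        exact hd_low x
      have h2 : ‖⟪R x, R x⟫_𝔄‖ = ‖R x‖ ^ 2 := (CStarModuleRight.norm_sq_eq).symm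
      have h3 : ‖x‖ ^ 2 ≤ (‖ai‖ * ‖R x‖) ^ 2 := by
        calc ‖x‖ ^ 2 ≤ (‖ai‖ * ‖ai‖) * ‖R x‖ ^ 2 := by rw [← h2]; exact h1
          _ = (‖ai‖ * ‖R x‖) ^ 2 := by ring
      have h4 : ‖x‖ ≤ ‖ai‖ * ‖R x‖ :=
        (pow_le_pow_iff_left₀ (norm_nonneg _) (by positivity) (by norm_num)).mp h3
      rw [inv_mul_le_iff₀ hα]
      exact h4
  refine ⟨?_, Rpart⟩
  -- Bijectivity
  by_cases hH : Subsingleton H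
  · exact ⟨fun a b _ => Subsingleton.elim a b, fun y => ⟨y, Subsingleton.elim _ _⟩⟩
  -- nontrivial case
  have hα : 0 < ‖ai‖ := by
    rcases eq_or_lt_of_le (norm_nonneg ai) with h0 | h
    · exfalso
      apply hH
      have hai0 : ai = 0 := by rwa [eq_comm, norm_eq_zero] at h0
      have h10 : (1:𝔄) = 0 := by rw [← hAai, hai0, mul_zero]
      constructor
      intro a b
      have hz : ∀ z : H, z = 0 := by
        intro z
        have : ⟪z, z⟫_𝔄 = 0 := by
          calc ⟪z, z⟫_𝔄 = ⟪z, z⟫_𝔄 * 1 := (mul_one _).symm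
            _ = 0 := by rw [h10, mul_zero]
        exact CStarModuleRight.inner_self.mp this
      rw [hz a, hz b]
    · exact h
  -- bounded below at 0
  have hlow0 : ∀ x : H, (‖ai‖ * ‖ai‖)⁻¹ * ‖x‖ ≤ ‖Sc x‖ := by
    intro x
    have h1 : ‖x‖ ^ 2 ≤ (‖ai‖ * ‖ai‖) * ‖⟪x, Sc x⟫_𝔄‖ := by
      apply hAA
      rw [hSc]
      exact hd_low x
    have h2 : ‖⟪x, Sc x⟫_𝔄‖ ≤ ‖x‖ * ‖Sc x‖ := CStarModuleRight.norm_inner_le H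
    rcases eq_or_lt_of_le (norm_nonneg x) with h0 | hx
    · rw [← h0, mul_zero]
      exact norm_nonneg _
    · have h3 : ‖x‖ * ‖x‖ ≤ ((‖ai‖ * ‖ai‖) * ‖Sc x‖) * ‖x‖ := by
        calc ‖x‖ * ‖x‖ = ‖x‖ ^ 2 := by ring
          _ ≤ (‖ai‖ * ‖ai‖) * (‖x‖ * ‖Sc x‖) :=
            le_trans h1 (mul_le_mul_of_nonneg_left h2 (by positivity))
          _ = ((‖ai‖ * ‖ai‖) * ‖Sc x‖) * ‖x‖ := by ring
      have h4 : ‖x‖ ≤ (‖ai‖ * ‖ai‖) * ‖Sc x‖ := le_of_mul_le_mul_right h3 hx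
      rw [inv_mul_le_iff₀ (by positivity)]
      exact h4
  -- injectivity
  have hinjS : Function.Injective Sf := by
    intro x y hxy
    have h1 : Sc (x - y) = 0 := by
      have : Sc x = Sc y := by rw [hSc, hSc, hxy]
      rw [map_sub, this, sub_self]
    have h2 := hlow0 (x - y)
    rw [h1, norm_zero] at h2
    have h3 : ‖x - y‖ ≤ 0 := by
      have hpos : (0:ℝ) < (‖ai‖ * ‖ai‖)⁻¹ := by positivity
      nlinarith [norm_nonneg (x - y)]
    exact sub_eq_zero.mp (norm_le_zero_iff.mp h3)
  -- the pencil of operators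
  set Tl : ℂ → H →L[ℂ] H := fun lam => Sc - lam • (1 : H →L[ℂ] H) with hTl
  have hTl_apply : ∀ (lam : ℂ) (x : H), Tl lam x = Sc x - lam • x := by
    intro lam x
    simp [hTl, ContinuousLinearMap.sub_apply, ContinuousLinearMap.smul_apply,
      ContinuousLinearMap.one_apply]
  -- inner expansion
  have hexp : ∀ (lam : ℂ) (x : H),
      ⟪Tl lam x, Tl lam x⟫_𝔄 = ⟪Sc x, Sc x⟫_𝔄 - (2 * lam.re) • ⟪x, Sc x⟫_𝔄
        + (Complex.normSq lam) • ⟪x, x⟫_𝔄 := by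
    intro lam x
    rw [hTl_apply]
    rw [CStarModuleRight.inner_sub_left, CStarModuleRight.inner_sub_right,
      CStarModuleRight.inner_sub_right, CStarModuleRight.inner_smul_left_complex,
      CStarModuleRight.inner_smul_right_complex, CStarModuleRight.inner_smul_right_complex,
      CStarModuleRight.inner_smul_left_complex]
    have hsx : ⟪Sc x, x⟫_𝔄 = ⟪x, Sc x⟫_𝔄 := hSf_sa x x
    rw [hsx]
    have e1 : lam • ⟪x, Sc x⟫_𝔄 + star lam • ⟪x, Sc x⟫_𝔄
        = (2 * lam.re : ℝ) • ⟪x, Sc x⟫_𝔄 := by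
      rw [← add_smul, ← Complex.coe_smul]
      congr 1
      rw [Complex.star_def, Complex.add_conj]
    have e2 : lam • star lam • ⟪x, x⟫_𝔄 = (Complex.normSq lam) • ⟪x, x⟫_𝔄 := by
      rw [smul_smul, ← Complex.coe_smul]
      congr 1
      rw [Complex.star_def, Complex.mul_conj]
    rw [e2, ← e1]
    abel
  -- real smul expansion
  have hexp2 : ∀ (t : ℝ) (x : H),
      ⟪t • x - Sc x, t • x - Sc x⟫_𝔄 = (t ^ 2) • ⟪x, x⟫_𝔄
        - (2 * t) • ⟪x, Sc x⟫_𝔄 + ⟪Sc x, Sc x⟫_𝔄 := by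
    intro t x
    rw [CStarModuleRight.inner_sub_left, CStarModuleRight.inner_sub_right,
      CStarModuleRight.inner_sub_right, CStarModuleRight.inner_smul_left_real,
      CStarModuleRight.inner_smul_right_real, CStarModuleRight.inner_smul_right_real,
      CStarModuleRight.inner_smul_left_real]
    have hsx : ⟪Sc x, x⟫_𝔄 = ⟪x, Sc x⟫_𝔄 := hSf_sa x x
    rw [hsx]
    module
  -- bounded below on the cut plane
  have hlb : ∀ lam : ℂ, lam.re ≤ 0 ∨ lam.im ≠ 0 →
      ∃ c : ℝ, 0 < c ∧ ∀ x, c * ‖x‖ ≤ ‖Tl lam x‖ := by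
    intro lam hlam
    by_cases hlam0 : lam = 0
    · refine ⟨(‖ai‖ * ‖ai‖)⁻¹, by positivity, fun x => ?_⟩
      have : Tl lam x = Sc x := by
        rw [hTl_apply, hlam0, zero_smul, sub_zero]
      rw [this]
      exact hlow0 x
    rcases lt_or_ge 0 lam.re with hre | hre
    · -- re > 0, hence im ≠ 0
      have him : lam.im ≠ 0 := by
        rcases hlam with h | h
        · linarith
        · exact h
      set a := lam.re with hadef
      set b := lam.im with hbdef
      set t : ℝ := a + b ^ 2 / (2 * a) with htdef
      have hta : a ≤ t := by
        rw [htdef]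
        have hb2 : 0 ≤ b ^ 2 / (2 * a) := by positivity
        linarith
      have ht : 0 < t := lt_of_lt_of_le hre hta
      refine ⟨Real.sqrt (b ^ 2 / 2), Real.sqrt_pos.mpr (by positivity), fun x => ?_⟩
      -- step 1 : (2a) • d ≤ (a*t) • xx + (a/t) • SS
      have step1 : (2 * a) • ⟪x, Sc x⟫_𝔄
          ≤ (a * t) • ⟪x, x⟫_𝔄 + (a / t) • ⟪Sc x, Sc x⟫_𝔄 := by
        have h1 : (0:𝔄) ≤ (t ^ 2) • ⟪x, x⟫_𝔄 - (2 * t) • ⟪x, Sc x⟫_𝔄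
            + ⟪Sc x, Sc x⟫_𝔄 := by
          rw [← hexp2 t x]
          exact CStarModuleRight.inner_self_nonneg
        have h2 : (2 * t) • ⟪x, Sc x⟫_𝔄 ≤ (t ^ 2) • ⟪x, x⟫_𝔄 + ⟪Sc x, Sc x⟫_𝔄 := by
          have h3 : (0:𝔄) ≤ (t ^ 2) • ⟪x, x⟫_𝔄 + ⟪Sc x, Sc x⟫_𝔄
              - (2 * t) • ⟪x, Sc x⟫_𝔄 := by
            rw [show (t ^ 2) • ⟪x, x⟫_𝔄 + ⟪Sc x, Sc x⟫_𝔄 - (2 * t) • ⟪x, Sc x⟫_𝔄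
              = (t ^ 2) • ⟪x, x⟫_𝔄 - (2 * t) • ⟪x, Sc x⟫_𝔄 + ⟪Sc x, Sc x⟫_𝔄 by abel]
            exact h1
          exact sub_nonneg.mp h3
        have h4 := smul_le_smul_of_nonneg_left h2 (le_of_lt (by positivity : (0:ℝ) < a / t))
        rw [smul_add, smul_smul, smul_smul] at h4
        rw [show a / t * (2 * t) = 2 * a by field_simp,
          show a / t * t ^ 2 = a * t by field_simp] at h4
        exact h4
      -- step 2 : conclude the order bound
      have step2 : (b ^ 2 / 2) • ⟪x, x⟫_𝔄 ≤ ⟪Tl lam x, Tl lam x⟫_𝔄 := by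
        rw [hexp lam x]
        have hns : Complex.normSq lam = a ^ 2 + b ^ 2 := by
          rw [Complex.normSq_apply]; ring
        rw [hns]
        have h5 : ⟪Sc x, Sc x⟫_𝔄 - (2 * a) • ⟪x, Sc x⟫_𝔄 + (a ^ 2 + b ^ 2) • ⟪x, x⟫_𝔄
            ≥ ⟪Sc x, Sc x⟫_𝔄 - ((a * t) • ⟪x, x⟫_𝔄 + (a / t) • ⟪Sc x, Sc x⟫_𝔄)
              + (a ^ 2 + b ^ 2) • ⟪x, x⟫_𝔄 := by
          have := sub_le_sub_right (sub_le_sub_left step1 (⟪Sc x, Sc x⟫_𝔄)) 0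
          simp only [sub_zero] at this
          exact add_le_add_left this _
        have h6 : ⟪Sc x, Sc x⟫_𝔄 - ((a * t) • ⟪x, x⟫_𝔄 + (a / t) • ⟪Sc x, Sc x⟫_𝔄)
              + (a ^ 2 + b ^ 2) • ⟪x, x⟫_𝔄
            = (1 - a / t) • ⟪Sc x, Sc x⟫_𝔄 + (a ^ 2 + b ^ 2 - a * t) • ⟪x, x⟫_𝔄 := by
          module
        have h7 : a ^ 2 + b ^ 2 - a * t = b ^ 2 / 2 := by
          rw [htdef]
          field_simp
          ring
        have h8 : (0:𝔄) ≤ (1 - a / t) • ⟪Sc x, Sc x⟫_𝔄 := by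
          apply smul_nonneg _ CStarModuleRight.inner_self_nonneg
          have : a / t ≤ 1 := by
            rw [div_le_one ht]
            exact hta
          linarith
        calc (b ^ 2 / 2) • ⟪x, x⟫_𝔄
            ≤ (1 - a / t) • ⟪Sc x, Sc x⟫_𝔄 + (b ^ 2 / 2) • ⟪x, x⟫_𝔄 :=
              le_add_of_nonneg_left h8
          _ = (1 - a / t) • ⟪Sc x, Sc x⟫_𝔄 + (a ^ 2 + b ^ 2 - a * t) • ⟪x, x⟫_𝔄 := by
              rw [h7]
          _ = ⟪Sc x, Sc x⟫_𝔄 - ((a * t) • ⟪x, x⟫_𝔄 + (a / t) • ⟪Sc x, Sc x⟫_𝔄)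
              + (a ^ 2 + b ^ 2) • ⟪x, x⟫_𝔄 := h6.symm
          _ ≤ ⟪Sc x, Sc x⟫_𝔄 - (2 * a) • ⟪x, Sc x⟫_𝔄 + (a ^ 2 + b ^ 2) • ⟪x, x⟫_𝔄 :=
              h5
      -- norms
      have h9 : (b ^ 2 / 2) * ‖x‖ ^ 2 ≤ ‖Tl lam x‖ ^ 2 := by
        have hnn : (0:𝔄) ≤ (b ^ 2 / 2) • ⟪x, x⟫_𝔄 :=
          smul_nonneg (by positivity) CStarModuleRight.inner_self_nonneg
        have h10 := CStarAlgebra.norm_le_norm_of_nonneg_of_le hnn step2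
        rw [norm_smul, Real.norm_of_nonneg (by positivity : (0:ℝ) ≤ b ^ 2 / 2)] at h10
        rw [CStarModuleRight.norm_sq_eq (𝔄 := 𝔄) (x := Tl lam x), CStarModuleRight.norm_sq_eq (𝔄 := 𝔄) (x := x)]
        exact h10
      have h11 : (Real.sqrt (b ^ 2 / 2) * ‖x‖) ^ 2 ≤ ‖Tl lam x‖ ^ 2 := by
        rw [mul_pow, Real.sq_sqrt (by positivity : (0:ℝ) ≤ b ^ 2 / 2)]
        exact h9
      exact (pow_le_pow_iff_left₀ (by positivity) (norm_nonneg _) (by norm_num)).mp h11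
    · -- re ≤ 0, lam ≠ 0
      refine ⟨‖lam‖, norm_pos_iff.mpr hlam0, fun x => ?_⟩
      have step2 : (Complex.normSq lam) • ⟪x, x⟫_𝔄 ≤ ⟪Tl lam x, Tl lam x⟫_𝔄 := by
        rw [hexp lam x]
        have h8 : (0:𝔄) ≤ ⟪Sc x, Sc x⟫_𝔄 - (2 * lam.re) • ⟪x, Sc x⟫_𝔄 := by
          have h9 : (0:𝔄) ≤ (-(2 * lam.re)) • ⟪x, Sc x⟫_𝔄 :=
            smul_nonneg (by linarith) (by rw [hSc]; exact hd0 x)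
          have h10 : ⟪Sc x, Sc x⟫_𝔄 - (2 * lam.re) • ⟪x, Sc x⟫_𝔄
              = ⟪Sc x, Sc x⟫_𝔄 + (-(2 * lam.re)) • ⟪x, Sc x⟫_𝔄 := by
            rw [neg_smul]; abel
          rw [h10]
          exact add_nonneg CStarModuleRight.inner_self_nonneg h9
        calc (Complex.normSq lam) • ⟪x, x⟫_𝔄
            ≤ (⟪Sc x, Sc x⟫_𝔄 - (2 * lam.re) • ⟪x, Sc x⟫_𝔄)
              + (Complex.normSq lam) • ⟪x, x⟫_𝔄 := le_add_of_nonneg_left h8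
          _ = _ := by abel
      have h9 : (Complex.normSq lam) * ‖x‖ ^ 2 ≤ ‖Tl lam x‖ ^ 2 := by
        have hnn : (0:𝔄) ≤ (Complex.normSq lam) • ⟪x, x⟫_𝔄 :=
          smul_nonneg (Complex.normSq_nonneg lam) CStarModuleRight.inner_self_nonneg
        have h10 := CStarAlgebra.norm_le_norm_of_nonneg_of_le hnn step2
        rw [norm_smul, Real.norm_of_nonneg (Complex.normSq_nonneg lam)] at h10
        rw [CStarModuleRight.norm_sq_eq (𝔄 := 𝔄) (x := Tl lam x), CStarModuleRight.norm_sq_eq (𝔄 := 𝔄) (x := x)]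
        exact h10
      have h11 : (‖lam‖ * ‖x‖) ^ 2 ≤ ‖Tl lam x‖ ^ 2 := by
        rw [mul_pow, Complex.sq_norm]
        exact h9
      exact (pow_le_pow_iff_left₀ (by positivity) (norm_nonneg _) (by norm_num)).mp h11
  -- difference estimate for the pencil
  have hTdiff : ∀ lam mu : ℂ, ‖Tl mu - Tl lam‖ ≤ dist mu lam := by
    intro lam mu
    have h1 : Tl mu - Tl lam = (lam - mu) • (1 : H →L[ℂ] H) := by
      simp only [hTl, sub_smul]
      abel
    rw [h1]
    have hb : ‖(lam - mu) • (1 : H →L[ℂ] H)‖ ≤ ‖lam - mu‖ := by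
      apply ContinuousLinearMap.opNorm_le_bound _ (norm_nonneg _)
      intro x
      rw [ContinuousLinearMap.smul_apply, ContinuousLinearMap.one_apply, norm_smul]
    calc ‖(lam - mu) • (1 : H →L[ℂ] H)‖ ≤ ‖lam - mu‖ := hb
      _ = dist mu lam := by rw [dist_eq_norm, norm_sub_rev]
  choose cf hcf0 hcfb using hlb
  set u : Set ℂ := {mu | ∃ lam, ∃ h : lam.re ≤ 0 ∨ lam.im ≠ 0,
      Function.Surjective (Tl lam) ∧ dist mu lam < cf lam h} with hudef
  set v : Set ℂ := {mu | ∃ lam, ∃ h : lam.re ≤ 0 ∨ lam.im ≠ 0,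
      ¬Function.Surjective (Tl lam) ∧ dist mu lam < cf lam h / 2} with hvdef
  have huo : IsOpen u := by
    rw [Metric.isOpen_iff]
    rintro mu ⟨lam, h, hsurj, hdist⟩
    refine ⟨cf lam h - dist mu lam, by linarith, fun z hz => ?_⟩
    rw [Metric.mem_ball] at hz
    exact ⟨lam, h, hsurj, by have := dist_triangle z mu lam; linarith⟩
  have hvo : IsOpen v := by
    rw [Metric.isOpen_iff]
    rintro mu ⟨lam, h, hsurj, hdist⟩
    refine ⟨cf lam h / 2 - dist mu lam, by linarith, fun z hz => ?_⟩
    rw [Metric.mem_ball] at hz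
    exact ⟨lam, h, hsurj, by have := dist_triangle z mu lam; linarith⟩
  have hu_surj : ∀ mu ∈ u, Function.Surjective (Tl mu) := by
    rintro mu ⟨lam, h, hsurj, hdist⟩
    exact my_surj_of_near (Tl lam) (Tl mu) (hcf0 lam h) (hcfb lam h) hsurj
      (lt_of_le_of_lt (hTdiff lam mu) hdist)
  have hdisj : ∀ mu, mu ∈ u → mu ∈ v → False := by
    rintro mu hmu ⟨lam, h, hnsurj, hdist⟩
    apply hnsurj
    have hlowmu : ∀ x, (cf lam h / 2) * ‖x‖ ≤ ‖Tl mu x‖ := by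
      intro x
      have h1 : ‖Tl lam x‖ ≤ ‖Tl mu x‖ + ‖(Tl lam - Tl mu) x‖ := by
        calc ‖Tl lam x‖ = ‖Tl mu x + (Tl lam - Tl mu) x‖ := by
              congr 1
              simp [ContinuousLinearMap.sub_apply]
          _ ≤ _ := norm_add_le _ _
      have h2 : ‖(Tl lam - Tl mu) x‖ ≤ ‖Tl lam - Tl mu‖ * ‖x‖ :=
        ContinuousLinearMap.le_opNorm _ _
      have h3 : ‖Tl lam - Tl mu‖ ≤ dist lam mu := hTdiff mu lam
      have h4 : dist lam mu < cf lam h / 2 := by rw [dist_comm]; exact hdist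
      have h5 := hcfb lam h x
      nlinarith [norm_nonneg x, norm_nonneg (Tl lam - Tl mu)]
    exact my_surj_of_near (Tl mu) (Tl lam) (by linarith [hcf0 lam h]) hlowmu
      (hu_surj mu hmu) (lt_of_le_of_lt (hTdiff mu lam) (by rw [dist_comm]; exact hdist))
  -- the cut plane is preconnected
  set W : Set ℂ := {z : ℂ | z.re ≤ 0 ∨ z.im ≠ 0} with hWdef
  have hWseg : ∀ z ∈ W, segment ℝ (-1 : ℂ) z ⊆ W := by
    intro z hz w hw
    obtain ⟨s1, s2, hs1, hs2, hsum12, rfl⟩ := hw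
    have hre' : (s1 • (-1 : ℂ) + s2 • z).re = -s1 + s2 * z.re := by
      simp [Complex.real_smul, Complex.add_re, Complex.mul_re]
    have him' : (s1 • (-1 : ℂ) + s2 • z).im = s2 * z.im := by
      simp [Complex.real_smul, Complex.add_im, Complex.mul_im]
    rcases hz with hre | him
    · left
      rw [hre']
      have : s2 * z.re ≤ 0 := mul_nonpos_of_nonneg_of_nonpos hs2 hre
      linarith
    · rcases eq_or_ne s2 0 with h2 | h2
      · left
        rw [hre', h2]
        have hs1' : s1 = 1 := by rw [h2] at hsum12; linarith
        rw [hs1']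
        linarith
      · right
        rw [him']
        exact mul_ne_zero h2 him
  have hWpre : IsPreconnected W := by
    have hW_eq : W = ⋃₀ ((fun z => segment ℝ (-1 : ℂ) z) '' W) := by
      apply Set.Subset.antisymm
      · intro z hz
        exact ⟨segment ℝ (-1 : ℂ) z, ⟨z, hz, rfl⟩, right_mem_segment ℝ _ _⟩
      · intro w hw
        obtain ⟨s, ⟨z, hz, rfl⟩, hws⟩ := hw
        exact hWseg z hz hws
    rw [hW_eq]
    apply isPreconnected_sUnion (-1 : ℂ)
    · rintro s ⟨z, hz, rfl⟩
      exact left_mem_segment ℝ _ _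
    · rintro s ⟨z, hz, rfl⟩
      exact (convex_segment _ _).isPreconnected
  -- a surjective point: lam = -(‖Sc‖ + 1)
  set r : ℝ := ‖Sc‖ + 1 with hrdef
  have hrpos : (0:ℝ) < r := by positivity
  have hrC : ((r : ℂ)) ≠ 0 := by
    exact_mod_cast hrpos.ne'
  have hsurj0 : Function.Surjective (Tl (-(r : ℂ))) := by
    set N : H →L[ℂ] H := -((r : ℂ)⁻¹ • Sc) with hNdef
    have hNnorm : ‖N‖ < 1 := by
      have hub : ‖N‖ ≤ r⁻¹ * ‖Sc‖ := by
        rw [hNdef, norm_neg]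
        apply ContinuousLinearMap.opNorm_le_bound _ (by positivity)
        intro x
        rw [ContinuousLinearMap.smul_apply, norm_smul, norm_inv]
        have h1 : ‖(r : ℂ)‖ = r := by
          rw [Complex.norm_real, Real.norm_of_nonneg hrpos.le]
        rw [h1, mul_assoc]
        exact mul_le_mul_of_nonneg_left (Sc.le_opNorm x) (by positivity)
      have h2 : r⁻¹ * ‖Sc‖ < r⁻¹ * r := by
        apply mul_lt_mul_of_pos_left _ (inv_pos.mpr hrpos)
        rw [hrdef]
        linarith
      rw [inv_mul_cancel₀ hrpos.ne'] at h2
      linarith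
    let u1 : (H →L[ℂ] H)ˣ := Units.oneSub N hNnorm
    have hval : Tl (-(r : ℂ)) = (r : ℂ) • u1.val := by
      have hu1 : (u1.val : H →L[ℂ] H) = 1 - N := rfl
      rw [hu1, hNdef, hTl]
      simp only
      rw [smul_sub, smul_neg, smul_smul, mul_inv_cancel₀ hrC, one_smul, neg_smul]
      abel
    intro y
    refine ⟨u1.inv ((r : ℂ)⁻¹ • y), ?_⟩
    rw [hval, ContinuousLinearMap.smul_apply]
    have h2 : u1.val (u1.inv ((r : ℂ)⁻¹ • y)) = (r : ℂ)⁻¹ • y := by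
      rw [← ContinuousLinearMap.mul_apply, u1.val_inv, ContinuousLinearMap.one_apply]
    rw [h2, smul_smul, mul_inv_cancel₀ hrC, one_smul]
  have hmW : (-(r : ℂ)) ∈ W := by
    show (-(r : ℂ)).re ≤ 0 ∨ (-(r : ℂ)).im ≠ 0
    left
    have h1 : (-(r : ℂ)).re = -r := by simp
    rw [h1]
    linarith
  -- conclusion: Tl 0 is surjective
  have hSc_surj : Function.Surjective Sc := by
    have hT0 : Tl 0 = Sc := by
      simp [hTl]
    by_contra hns
    rw [← hT0] at hns
    have h0W : (0:ℂ) ∈ W := by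
      show (0:ℂ).re ≤ 0 ∨ (0:ℂ).im ≠ 0
      left
      simp
    have hcover : W ⊆ u ∪ v := by
      intro lam hlam
      have hlam' : lam.re ≤ 0 ∨ lam.im ≠ 0 := hlam
      by_cases hsur : Function.Surjective (Tl lam)
      · exact Or.inl ⟨lam, hlam', hsur, by rw [dist_self]; exact hcf0 lam hlam'⟩
      · exact Or.inr ⟨lam, hlam', hsur, by rw [dist_self]; exact half_pos (hcf0 lam hlam')⟩
    have hWu : (W ∩ u).Nonempty :=
      ⟨-(r : ℂ), hmW, ⟨-(r : ℂ), hmW, hsurj0, by rw [dist_self]; exact hcf0 _ hmW⟩⟩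
    have hWv : (W ∩ v).Nonempty :=
      ⟨0, h0W, ⟨0, h0W, hns, by rw [dist_self]; exact half_pos (hcf0 _ h0W)⟩⟩
    obtain ⟨z, hzW, hzu, hzv⟩ := hWpre u v huo hvo hcover hWu hWv
    exact hdisj z hzu hzv
  constructor
  · intro x y hxy
    apply hinjS
    rw [← hS' x, ← hS' y, hxy]
  · intro y
    obtain ⟨x, hx⟩ := hSc_surj y
    refine ⟨x, ?_⟩
    rw [hS' x, ← hSc x]
    exact hx
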